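/- Completeness of the distribution-level logic: in an image-finite pLTS the logical metric d^L_d(Δ₁,Δ₂) = sup_ψ |⟦ψ⟧(Δ₁) − ⟦ψ⟧(Δ₂)| over formulae ψ of L^{D*} is a distribution-based bisimulation metric, and hence d_d = d^L_d. -/

import Mathlib

open scoped BigOperators

/-- A (full) probability distribution over a finite set `S`. -/
def IsDist {S : Type} [Fintype S] (Δ : S → ℝ) : Prop :=
  (∀ s, 0 ≤ Δ s) ∧ ∑ s, Δ s = 1

/-- A matching (coupling) for a pair of distributions. -/
def IsMatching {S : Type} [Fintype S] (ω : S × S → ℝ) (Δ Θ : S → ℝ) : Prop :=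
  IsDist ω ∧ (∀ s, ∑ t, ω (s, t) = Δ s) ∧ (∀ t, ∑ s, ω (s, t) = Θ t)

/-- The Kantorovich lifting of `d` (primal formulation, via matchings). -/
noncomputable def Kan {S : Type} [Fintype S] (d : S → S → ℝ) (Δ Θ : S → ℝ) : ℝ :=
  sInf {r | ∃ ω : S × S → ℝ, IsMatching ω Δ Θ ∧ r = ∑ p : S × S, d p.1 p.2 * ω p}

/-- The Kantorovich lifting of `d` (dual linear-programming formulation). -/
noncomputable def KanD {S : Type} [Fintype S] (d : S → S → ℝ) (Δ Θ : S → ℝ) : ℝ :=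
  sSup {r | ∃ x : S → ℝ, (∀ s, 0 ≤ x s ∧ x s ≤ 1) ∧ (∀ s t, x s - x t ≤ d s t) ∧
    r = ∑ s, (Δ s - Θ s) * x s}

/-- `d` is a pseudometric. -/
def IsPseudometric {X : Type*} (d : X → X → ℝ) : Prop :=
  (∀ x, d x x = 0) ∧ (∀ x y, d x y = d y x) ∧ ∀ x y z, d x z ≤ d x y + d y z

/-- `d` is `1`-bounded (takes values in `[0,1]`). -/
def Bounded1 {X : Type*} (d : X → X → ℝ) : Prop := ∀ x y, 0 ≤ d x y ∧ d x y ≤ 1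

open Classical in
/-- Infimum of a set of reals with the convention `inf ∅ = 1`. -/
noncomputable def inf1 (s : Set ℝ) : ℝ := if s.Nonempty then sInf s else 1

open Classical in
/-- Supremum of a set of reals with the convention `sup ∅ = 0`. -/
noncomputable def sup0 (s : Set ℝ) : ℝ := if s.Nonempty then sSup s else 0

/-- The Hausdorff lifting of a `1`-bounded metric to subsets. -/
noncomputable def hausd {X : Type*} (d : X → X → ℝ) (P Q : Set X) : ℝ :=
  max (sup0 {r | ∃ x ∈ P, r = inf1 {r' | ∃ y ∈ Q, r' = d x y}})
      (sup0 {r | ∃ y ∈ Q, r = inf1 {r' | ∃ x ∈ P, r' = d x y}})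

/-- A probabilistic labelled transition system. -/
structure PLTS (S : Type) (A : Type) where
  trans : S → A → (S → ℝ) → Prop

/-- The set of `a`-successor distributions of state `s`. -/
def der {S A : Type} (T : PLTS S A) (s : S) (a : A) : Set (S → ℝ) := {Δ | T.trans s a Δ}

/-- Image-finiteness of a pLTS. -/
def ImageFinite {S A : Type} (T : PLTS S A) : Prop := ∀ s a, (der T s a).Finite

/-- Every transition target is a (full) distribution. -/
def WellFormed {S A : Type} [Fintype S] (T : PLTS S A) : Prop :=
  ∀ s a Δ, T.trans s a Δ → IsDist Δ

/-- `d` is a state-based bisimulation metric. -/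
def IsSBM {S A : Type} [Fintype S] (T : PLTS S A) (d : S → S → ℝ) : Prop :=
  IsPseudometric d ∧ Bounded1 d ∧
  ∀ s t (ε : ℝ), 0 ≤ ε → ε < 1 → d s t ≤ ε →
    ∀ a Δ, T.trans s a Δ → ∃ Δ', T.trans t a Δ' ∧ Kan d Δ Δ' ≤ ε

/-- The unit interval `[0,1]` as a type of probabilities. -/
abbrev UI : Type := { p : ℝ // 0 ≤ p ∧ p ≤ 1 }

/-- A subdistribution over a finite set `S`. -/
def IsSubDist {S : Type} [Fintype S] (Δ : S → ℝ) : Prop :=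
  (∀ s, 0 ≤ Δ s) ∧ ∑ s, Δ s ≤ 1

/-- The mass `|Δ|` of a subdistribution. -/
noncomputable def mass {S : Type} [Fintype S] (Δ : S → ℝ) : ℝ := ∑ s, Δ s

/-- The lifted transition relation on subdistributions:
`Δ →ᵃ Δ'` if `Δ' = Σ_{s ∈ supp Δ} Δ(s)·Δ_s`, where each `Δ_s` is an
`a`-successor of `s`, or the empty subdistribution if `s` has no
`a`-transition. -/
def liftTrans {S A : Type} [Fintype S] (T : PLTS S A) (a : A) (Δ Δ' : S → ℝ) : Prop :=
  ∃ f : S → S → ℝ,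
    (∀ s, Δ s ≠ 0 →
      (T.trans s a (f s) ∨ ((∀ Θ, ¬ T.trans s a Θ) ∧ f s = fun _ => 0))) ∧
    Δ' = fun t => ∑ s, Δ s * f s t

/-- Formulae of the distribution-level logic `L^{D*}`. -/
inductive DFm (A : Type) : Type where
  | top : DFm A
  | neg : DFm A → DFm A
  | sub : DFm A → UI → DFm A
  | and : DFm A → DFm A → DFm A
  | dia : A → DFm A → DFm A

/-- Semantics of `L^{D*}` formulae on subdistributions. -/
noncomputable def semL {S A : Type} [Fintype S] (T : PLTS S A) : DFm A → (S → ℝ) → ℝ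
  | DFm.top, Δ => ∑ s, Δ s
  | DFm.neg ψ, Δ => 1 - semL T ψ Δ
  | DFm.sub ψ p, Δ => max (semL T ψ Δ - p.1) 0
  | DFm.and ψ₁ ψ₂, Δ => min (semL T ψ₁ Δ) (semL T ψ₂ Δ)
  | DFm.dia a ψ, Δ => sup0 {r | ∃ Δ', liftTrans T a Δ Δ' ∧ r = semL T ψ Δ'}

/-- `d` is a distribution-based bisimulation metric: a 1-bounded pseudometric
on subdistributions dominating the mass difference and satisfying the
ε-transfer condition for lifted transitions. -/
def IsDBM {S A : Type} [Fintype S] (T : PLTS S A)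
    (d : (S → ℝ) → (S → ℝ) → ℝ) : Prop :=
  (∀ Δ, IsSubDist Δ → d Δ Δ = 0) ∧
  (∀ Δ Θ, IsSubDist Δ → IsSubDist Θ → d Δ Θ = d Θ Δ) ∧
  (∀ Δ Θ Ξ, IsSubDist Δ → IsSubDist Θ → IsSubDist Ξ → d Δ Ξ ≤ d Δ Θ + d Θ Ξ) ∧
  (∀ Δ Θ, IsSubDist Δ → IsSubDist Θ → 0 ≤ d Δ Θ ∧ d Δ Θ ≤ 1) ∧
  (∀ Δ Θ, IsSubDist Δ → IsSubDist Θ → |mass Δ - mass Θ| ≤ d Δ Θ) ∧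
  (∀ Δ₁ Δ₂, IsSubDist Δ₁ → IsSubDist Δ₂ →
    ∀ ε : ℝ, 0 ≤ ε → ε < 1 → d Δ₁ Δ₂ ≤ ε →
      ∀ a Δ₁', liftTrans T a Δ₁ Δ₁' →
        ∃ Δ₂', liftTrans T a Δ₂ Δ₂' ∧ d Δ₁' Δ₂' ≤ ε)

/-- The logical metric on subdistributions induced by `L^{D*}`. -/
noncomputable def dDistLogic {S A : Type} [Fintype S] (T : PLTS S A) :
    (S → ℝ) → (S → ℝ) → ℝ :=
  fun Δ Θ => sSup {r | ∃ ψ : DFm A, r = |semL T ψ Δ - semL T ψ Θ|}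


section Aux

variable {S A : Type} [Fintype S] (T : PLTS S A)

lemma sup0_eq_sSup (s : Set ℝ) : sup0 s = sSup s := by
  classical
  unfold sup0
  split
  · rfl
  · rename_i h
    rw [Set.not_nonempty_iff_eq_empty.mp h, Real.sSup_empty]

/-- Every subdistribution has an `a`-successor. -/
lemma liftTrans_exists (a : A) (Δ : S → ℝ) : ∃ Δ', liftTrans T a Δ Δ' := by
  classical
  refine ⟨_, fun s => if h : ∃ Θ, T.trans s a Θ then h.choose else fun _ => 0,
    fun s _ => ?_, rfl⟩
  by_cases h : ∃ Θ, T.trans s a Θ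
  · left; simpa [dif_pos h] using h.choose_spec
  · right
    push_neg at h
    exact ⟨h, by simp [dif_neg (by push_neg; exact h : ¬ ∃ Θ, T.trans s a Θ)]⟩

lemma liftTrans_subdist (hwf : WellFormed T) {a : A} {Δ Δ' : S → ℝ}
    (hΔ : IsSubDist Δ) (h : liftTrans T a Δ Δ') : IsSubDist Δ' := by
  obtain ⟨f, hf, rfl⟩ := h
  have hterm : ∀ s t, 0 ≤ Δ s * f s t := by
    intro s t
    by_cases hs : Δ s = 0
    · simp [hs]
    · rcases hf s hs with h1 | ⟨_, h2⟩
      · exact mul_nonneg (hΔ.1 s) ((hwf s a _ h1).1 t)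
      · simp [h2]
  constructor
  · intro t; exact Finset.sum_nonneg fun s _ => hterm s t
  · calc ∑ t, ∑ s, Δ s * f s t = ∑ s, Δ s * ∑ t, f s t := by
          rw [Finset.sum_comm]; simp [Finset.mul_sum]
    _ ≤ ∑ s, Δ s := by
          apply Finset.sum_le_sum; intro s _
          by_cases hs : Δ s = 0
          · simp [hs]
          · rcases hf s hs with h1 | ⟨_, h2⟩
            · have h2 := (hwf s a _ h1).2
              have h0 := hΔ.1 s
              nlinarith
            · simp only [h2]; simpa using hΔ.1 s
    _ ≤ 1 := hΔ.2

lemma semL_bounds (hwf : WellFormed T) :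
    ∀ (ψ : DFm A) (Δ : S → ℝ), IsSubDist Δ → 0 ≤ semL T ψ Δ ∧ semL T ψ Δ ≤ 1 := by
  intro ψ
  induction ψ with
  | top =>
      intro Δ hΔ
      exact ⟨Finset.sum_nonneg fun s _ => hΔ.1 s, hΔ.2⟩
  | neg ψ ih =>
      intro Δ hΔ
      have := ih Δ hΔ
      simp only [semL]
      constructor <;> linarith [this.1, this.2]
  | sub ψ p ih =>
      intro Δ hΔ
      have := ih Δ hΔ
      have hp := p.2
      simp only [semL]
      constructor
      · exact le_max_right _ _
      · apply max_le <;> linarith [this.2, hp.1]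
  | and ψ₁ ψ₂ ih₁ ih₂ =>
      intro Δ hΔ
      have h1 := ih₁ Δ hΔ
      have h2 := ih₂ Δ hΔ
      simp only [semL]
      exact ⟨le_min h1.1 h2.1, min_le_of_left_le h1.2⟩
  | dia a ψ ih =>
      intro Δ hΔ
      simp only [semL, sup0_eq_sSup]
      have hub : ∀ r ∈ {r | ∃ Δ', liftTrans T a Δ Δ' ∧ r = semL T ψ Δ'}, r ≤ 1 := by
        rintro r ⟨Δ', hΔ', rfl⟩
        exact (ih Δ' (liftTrans_subdist T hwf hΔ hΔ')).2
      constructor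
      · obtain ⟨Δ', hΔ'⟩ := liftTrans_exists T a Δ
        have hmem : semL T ψ Δ' ∈ {r | ∃ Δ', liftTrans T a Δ Δ' ∧ r = semL T ψ Δ'} :=
          ⟨Δ', hΔ', rfl⟩
        exact le_trans (ih Δ' (liftTrans_subdist T hwf hΔ hΔ')).1
          (le_csSup ⟨1, hub⟩ hmem)
      · exact Real.sSup_le hub zero_le_one

/-- The set defining `dDistLogic`. -/
def dSet (Δ Θ : S → ℝ) : Set ℝ := {r | ∃ ψ : DFm A, r = |semL T ψ Δ - semL T ψ Θ|}

lemma dSet_nonempty (Δ Θ : S → ℝ) : (dSet T Δ Θ).Nonempty := ⟨_, DFm.top, rfl⟩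

lemma dSet_bddAbove (hwf : WellFormed T) {Δ Θ : S → ℝ}
    (hΔ : IsSubDist Δ) (hΘ : IsSubDist Θ) :
    ∀ r ∈ dSet T Δ Θ, r ≤ 1 := by
  rintro r ⟨ψ, rfl⟩
  have h1 := semL_bounds T hwf ψ Δ hΔ
  have h2 := semL_bounds T hwf ψ Θ hΘ
  rw [abs_le]
  constructor <;> linarith [h1.1, h1.2, h2.1, h2.2]

lemma dDistLogic_eq (Δ Θ : S → ℝ) : dDistLogic T Δ Θ = sSup (dSet T Δ Θ) := rfl

lemma le_dDistLogic (hwf : WellFormed T) {Δ Θ : S → ℝ}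
    (hΔ : IsSubDist Δ) (hΘ : IsSubDist Θ) (ψ : DFm A) :
    |semL T ψ Δ - semL T ψ Θ| ≤ dDistLogic T Δ Θ :=
  le_csSup ⟨1, dSet_bddAbove T hwf hΔ hΘ⟩ ⟨ψ, rfl⟩

lemma dDistLogic_le {Δ Θ : S → ℝ} {b : ℝ}
    (h : ∀ ψ : DFm A, |semL T ψ Δ - semL T ψ Θ| ≤ b) : dDistLogic T Δ Θ ≤ b :=
  csSup_le (dSet_nonempty T Δ Θ) (by rintro r ⟨ψ, rfl⟩; exact h ψ)

/-- If the logical distance exceeds `ε`, some formula witnesses it with a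
positive difference. -/
lemma exists_formula_gt (hwf : WellFormed T) {Δ Θ : S → ℝ}
    (hΔ : IsSubDist Δ) (hΘ : IsSubDist Θ) {ε : ℝ}
    (h : ε < dDistLogic T Δ Θ) :
    ∃ ψ : DFm A, ε < semL T ψ Δ - semL T ψ Θ := by
  by_contra hc
  push_neg at hc
  have : dDistLogic T Δ Θ ≤ ε := by
    apply dDistLogic_le
    intro ψ
    rw [abs_le]
    refine ⟨?_, hc ψ⟩
    have := hc (DFm.neg ψ)
    simp only [semL] at this
    linarith
  linarith

/-- The constant-one formula. -/
def oneFm : DFm A := DFm.neg (DFm.sub DFm.top ⟨1, le_refl 0 |>.trans zero_le_one, le_refl 1⟩)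

lemma semL_oneFm {Δ : S → ℝ} (hΔ : IsSubDist Δ) : semL T (oneFm : DFm A) Δ = 1 := by
  simp only [oneFm, semL]
  have : max (∑ s, Δ s - 1) 0 = 0 := max_eq_right (by linarith [hΔ.2])
  rw [this]; ring

/-- Conjunction over a list of formulae. -/
def conjFm (L : List (DFm A)) : DFm A := L.foldr DFm.and oneFm

lemma semL_conjFm (L : List (DFm A)) (Δ : S → ℝ) :
    semL T (conjFm L) Δ = L.foldr (fun φ r => min (semL T φ Δ) r) (semL T (oneFm : DFm A) Δ) := by
  induction L with
  | nil => rfl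
  | cons φ L ih => simp only [conjFm, List.foldr_cons, semL] at *; rw [ih]

lemma semL_conjFm_le_of_mem (L : List (DFm A)) {φ : DFm A} (hφ : φ ∈ L) (Δ : S → ℝ) :
    semL T (conjFm L) Δ ≤ semL T φ Δ := by
  rw [semL_conjFm]
  induction L with
  | nil => cases hφ
  | cons φ' L ih =>
      simp only [List.foldr_cons]
      rcases List.mem_cons.mp hφ with h | h
      · subst h; exact min_le_left _ _
      · exact le_trans (min_le_right _ _) (ih h)

lemma le_semL_conjFm {L : List (DFm A)} {Δ : S → ℝ} {c : ℝ}
    (h : ∀ φ ∈ L, c ≤ semL T φ Δ) (h1 : c ≤ semL T (oneFm : DFm A) Δ) :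
    c ≤ semL T (conjFm L) Δ := by
  rw [semL_conjFm]
  induction L with
  | nil => exact h1
  | cons φ L ih =>
      simp only [List.foldr_cons]
      exact le_min (h φ List.mem_cons_self) (ih fun φ' hφ' => h φ' (List.mem_cons_of_mem _ hφ'))

/-- Soundness: any distribution-based bisimulation metric bounds every logical
difference. -/
lemma semL_soundness (hwf : WellFormed T) {dd : (S → ℝ) → (S → ℝ) → ℝ}
    (hdd : IsDBM T dd) :
    ∀ (ψ : DFm A) (Δ Θ : S → ℝ), IsSubDist Δ → IsSubDist Θ →
      |semL T ψ Δ - semL T ψ Θ| ≤ dd Δ Θ := by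
  intro ψ
  induction ψ with
  | top =>
      intro Δ Θ hΔ hΘ
      simpa [mass, semL] using hdd.2.2.2.2.1 Δ Θ hΔ hΘ
  | neg ψ ih =>
      intro Δ Θ hΔ hΘ
      have := ih Δ Θ hΔ hΘ
      simp only [semL]
      calc |1 - semL T ψ Δ - (1 - semL T ψ Θ)| = |semL T ψ Θ - semL T ψ Δ| := by
            ring_nf
        _ = |semL T ψ Δ - semL T ψ Θ| := abs_sub_comm _ _
        _ ≤ dd Δ Θ := this
  | sub ψ p ih =>
      intro Δ Θ hΔ hΘ
      have := ih Δ Θ hΔ hΘ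
      simp only [semL]
      refine le_trans ?_ this
      have h := abs_max_sub_max_le_abs (semL T ψ Δ - p.1) (semL T ψ Θ - p.1) 0
      calc |max (semL T ψ Δ - p.1) 0 - max (semL T ψ Θ - p.1) 0|
          ≤ |semL T ψ Δ - p.1 - (semL T ψ Θ - p.1)| := h
        _ = |semL T ψ Δ - semL T ψ Θ| := by ring_nf
  | and ψ₁ ψ₂ ih₁ ih₂ =>
      intro Δ Θ hΔ hΘ
      have h₁ := ih₁ Δ Θ hΔ hΘ
      have h₂ := ih₂ Δ Θ hΔ hΘ
      simp only [semL]
      refine le_trans (abs_min_sub_min_le_max _ _ _ _) (max_le h₁ h₂)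
  | dia a ψ ih =>
      have key : ∀ Δ Θ, IsSubDist Δ → IsSubDist Θ →
          semL T (DFm.dia a ψ) Δ - semL T (DFm.dia a ψ) Θ ≤ dd Δ Θ := by
        intro Δ Θ hΔ hΘ
        have hεnn := (hdd.2.2.2.1 Δ Θ hΔ hΘ).1
        by_cases hε : dd Δ Θ < 1
        · simp only [semL, sup0_eq_sSup]
          have hub : ∀ r ∈ {r | ∃ Θ', liftTrans T a Θ Θ' ∧ r = semL T ψ Θ'}, r ≤ 1 := by
            rintro r ⟨Θ', hΘ', rfl⟩
            exact (semL_bounds T hwf ψ Θ' (liftTrans_subdist T hwf hΘ hΘ')).2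
          have hynn : 0 ≤ sSup {r | ∃ Θ', liftTrans T a Θ Θ' ∧ r = semL T ψ Θ'} := by
            obtain ⟨Θ', hΘ'⟩ := liftTrans_exists T a Θ
            exact le_trans (semL_bounds T hwf ψ Θ' (liftTrans_subdist T hwf hΘ hΘ')).1
              (le_csSup ⟨1, hub⟩ ⟨Θ', hΘ', rfl⟩)
          rw [sub_le_iff_le_add]
          apply Real.sSup_le
          · rintro r ⟨Δ', hΔ', rfl⟩
            obtain ⟨Θ', hΘ', hdle⟩ :=
              hdd.2.2.2.2.2 Δ Θ hΔ hΘ (dd Δ Θ) hεnn hε le_rfl a Δ' hΔ'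
            have hih := ih Δ' Θ' (liftTrans_subdist T hwf hΔ hΔ')
              (liftTrans_subdist T hwf hΘ hΘ')
            have h1 := (abs_le.mp hih).2
            have h2 := le_csSup ⟨1, hub⟩ (⟨Θ', hΘ', rfl⟩ :
              semL T ψ Θ' ∈ {r | ∃ Θ', liftTrans T a Θ Θ' ∧ r = semL T ψ Θ'})
            linarith
          · linarith
        · push_neg at hε
          have h1 := (semL_bounds T hwf (DFm.dia a ψ) Δ hΔ).2
          have h2 := (semL_bounds T hwf (DFm.dia a ψ) Θ hΘ).1
          linarith
      intro Δ Θ hΔ hΘ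
      rw [abs_sub_le_iff]
      exact ⟨key Δ Θ hΔ hΘ, (hdd.2.1 Δ Θ hΔ hΘ) ▸ key Θ Δ hΘ hΔ⟩

/-- The ε-transfer condition for the logical metric. -/
lemma dDistLogic_transfer (hwf : WellFormed T)
    (hfin : ∀ (Δ : S → ℝ) (a : A), {Δ' | liftTrans T a Δ Δ'}.Finite) :
    ∀ Δ₁ Δ₂ : S → ℝ, IsSubDist Δ₁ → IsSubDist Δ₂ →
    ∀ ε : ℝ, 0 ≤ ε → ε < 1 → dDistLogic T Δ₁ Δ₂ ≤ ε →
      ∀ a Δ₁', liftTrans T a Δ₁ Δ₁' →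
        ∃ Δ₂', liftTrans T a Δ₂ Δ₂' ∧ dDistLogic T Δ₁' Δ₂' ≤ ε := by
  classical
  intro Δ₁ Δ₂ h1 h2 ε hε0 hε1 hd a Δ₁' hΔ₁'
  by_contra hc
  push_neg at hc
  have h1' : IsSubDist Δ₁' := liftTrans_subdist T hwf h1 hΔ₁'
  set Fs := (hfin Δ₂ a).toFinset with hFsdef
  have hmemFs : ∀ Θ, Θ ∈ Fs ↔ liftTrans T a Δ₂ Θ := fun Θ => (hfin Δ₂ a).mem_toFinset
  have hFsne : Fs.Nonempty := by
    obtain ⟨Θ, hΘ⟩ := liftTrans_exists T a Δ₂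
    exact ⟨Θ, (hmemFs Θ).mpr hΘ⟩
  have hsubΘ : ∀ Θ ∈ Fs, IsSubDist Θ := fun Θ hΘ =>
    liftTrans_subdist T hwf h2 ((hmemFs Θ).mp hΘ)
  have hch : ∀ Θ ∈ Fs, ∃ ψ : DFm A, ε < semL T ψ Δ₁' - semL T ψ Θ := by
    intro Θ hΘ
    exact exists_formula_gt T hwf h1' (hsubΘ Θ hΘ) (hc Θ ((hmemFs Θ).mp hΘ))
  let g : (S → ℝ) → DFm A := fun Θ =>
    if h : ∃ ψ : DFm A, ε < semL T ψ Δ₁' - semL T ψ Θ then h.choose else DFm.top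
  have hg : ∀ Θ ∈ Fs, ε < semL T (g Θ) Δ₁' - semL T (g Θ) Θ := by
    intro Θ hΘ
    have hex := hch Θ hΘ
    simpa only [g, dif_pos hex] using hex.choose_spec
  set m := Fs.inf' hFsne (fun Θ => semL T (g Θ) Δ₁' - semL T (g Θ) Θ) with hmdef
  have hεm : ε < m := (Finset.lt_inf'_iff hFsne).mpr hg
  have hm1 : m ≤ 1 := by
    obtain ⟨Θ, hΘ⟩ := hFsne
    refine le_trans (Finset.inf'_le _ hΘ) ?_
    have hb1 := (semL_bounds T hwf (g Θ) Δ₁' h1').2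
    have hb2 := (semL_bounds T hwf (g Θ) Θ (hsubΘ Θ hΘ)).1
    linarith
  set ε' := (ε + m) / 2 with hε'def
  have hεε' : ε < ε' := by rw [hε'def]; linarith
  have hε'm : ε' < m := by rw [hε'def]; linarith
  have hε'0 : 0 ≤ ε' := le_of_lt (lt_of_le_of_lt hε0 hεε')
  have hε'1 : ε' ≤ 1 := by rw [hε'def]; linarith
  have hdiffm : ∀ Θ ∈ Fs, ε' < semL T (g Θ) Δ₁' - semL T (g Θ) Θ := by
    intro Θ hΘ
    exact lt_of_lt_of_le hε'm (Finset.inf'_le _ hΘ)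
  have hp : ∀ Θ ∈ Fs, 0 ≤ semL T (g Θ) Δ₁' - ε' ∧ semL T (g Θ) Δ₁' - ε' ≤ 1 := by
    intro Θ hΘ
    have hb1 := (semL_bounds T hwf (g Θ) Δ₁' h1').2
    have hb2 := (semL_bounds T hwf (g Θ) Θ (hsubΘ Θ hΘ)).1
    have := hdiffm Θ hΘ
    constructor <;> linarith
  let pv : (S → ℝ) → ℝ := fun Θ => min 1 (max 0 (semL T (g Θ) Δ₁' - ε'))
  have hpv : ∀ Θ ∈ Fs, pv Θ = semL T (g Θ) Δ₁' - ε' := by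
    intro Θ hΘ
    have := hp Θ hΘ
    simp only [pv]
    rw [max_eq_right this.1, min_eq_right this.2]
  let φ : (S → ℝ) → DFm A := fun Θ =>
    DFm.sub (g Θ) ⟨pv Θ, le_min zero_le_one (le_max_left 0 _), min_le_left _ _⟩
  let conj : DFm A := conjFm (Fs.toList.map φ)
  have hconj1 : ε' ≤ semL T conj Δ₁' := by
    apply le_semL_conjFm
    · intro φ' hφ'
      obtain ⟨Θ, hΘ, rfl⟩ := List.mem_map.mp hφ'
      have hΘF : Θ ∈ Fs := Finset.mem_toList.mp hΘ
      show ε' ≤ semL T (DFm.sub (g Θ) _) Δ₁'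
      simp only [semL]
      rw [hpv Θ hΘF]
      have heq : semL T (g Θ) Δ₁' - (semL T (g Θ) Δ₁' - ε') = ε' := by ring
      rw [heq]
      exact le_max_left _ _
    · rw [semL_oneFm T h1']; exact hε'1
  have hconj2 : ∀ Θ, liftTrans T a Δ₂ Θ → semL T conj Θ = 0 := by
    intro Θ hΘt
    have hΘF : Θ ∈ Fs := (hmemFs Θ).mpr hΘt
    have hΘs : IsSubDist Θ := hsubΘ Θ hΘF
    have hle : semL T conj Θ ≤ semL T (φ Θ) Θ :=
      semL_conjFm_le_of_mem T _ (List.mem_map.mpr ⟨Θ, Finset.mem_toList.mpr hΘF, rfl⟩) Θ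
    have hz : semL T (φ Θ) Θ = 0 := by
      simp only [φ, semL]
      rw [hpv Θ hΘF]
      apply max_eq_right
      have := hdiffm Θ hΘF
      linarith
    exact le_antisymm (hz ▸ hle) (semL_bounds T hwf conj Θ hΘs).1
  have hdia1 : ε' ≤ semL T (DFm.dia a conj) Δ₁ := by
    simp only [semL, sup0_eq_sSup]
    have hub : ∀ r ∈ {r | ∃ Δ', liftTrans T a Δ₁ Δ' ∧ r = semL T conj Δ'}, r ≤ 1 := by
      rintro r ⟨Δ', hΔ', rfl⟩
      exact (semL_bounds T hwf conj Δ' (liftTrans_subdist T hwf h1 hΔ')).2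
    exact le_trans hconj1 (le_csSup ⟨1, hub⟩ ⟨Δ₁', hΔ₁', rfl⟩)
  have hdia2 : semL T (DFm.dia a conj) Δ₂ ≤ 0 := by
    simp only [semL, sup0_eq_sSup]
    apply Real.sSup_le _ le_rfl
    rintro r ⟨Θ, hΘ, rfl⟩
    exact le_of_eq (hconj2 Θ hΘ)
  have hfinal := le_dDistLogic T hwf h1 h2 (DFm.dia a conj)
  have habs : ε' ≤ |semL T (DFm.dia a conj) Δ₁ - semL T (DFm.dia a conj) Δ₂| := by
    rw [abs_of_nonneg (by linarith)]
    linarith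
  linarith

end Aux

/-- Completeness of the distribution-level logic `L^{D*}`: the logical metric
is itself a distribution-based bisimulation metric, hence it coincides with the
distribution-based bisimilarity metric. -/
theorem dist_logic_completeness {S A : Type} [Fintype S] (T : PLTS S A)
    (hwf : WellFormed T)
    (hfin : ∀ (Δ : S → ℝ) (a : A), {Δ' | liftTrans T a Δ Δ'}.Finite) :
    IsDBM T (dDistLogic T) ∧
    ∀ dd : (S → ℝ) → (S → ℝ) → ℝ,
      (IsDBM T dd ∧
        ∀ d, IsDBM T d → ∀ Δ Θ, IsSubDist Δ → IsSubDist Θ → dd Δ Θ ≤ d Δ Θ) →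
      ∀ Δ Θ : S → ℝ, IsSubDist Δ → IsSubDist Θ → dd Δ Θ = dDistLogic T Δ Θ := by
  have hdbm : IsDBM T (dDistLogic T) := by
    refine ⟨?_, ?_, ?_, ?_, ?_, dDistLogic_transfer T hwf hfin⟩
    · intro Δ hΔ
      refine le_antisymm (dDistLogic_le T fun ψ => by simp) ?_
      simpa using le_dDistLogic T hwf hΔ hΔ (DFm.top : DFm A)
    · intro Δ Θ hΔ hΘ
      refine le_antisymm (dDistLogic_le T fun ψ => ?_) (dDistLogic_le T fun ψ => ?_)
      · rw [abs_sub_comm]; exact le_dDistLogic T hwf hΘ hΔ ψ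
      · rw [abs_sub_comm]; exact le_dDistLogic T hwf hΔ hΘ ψ
    · intro Δ Θ Ξ hΔ hΘ hΞ
      refine dDistLogic_le T fun ψ => ?_
      exact le_trans (abs_sub_le _ _ _)
        (add_le_add (le_dDistLogic T hwf hΔ hΘ ψ) (le_dDistLogic T hwf hΘ hΞ ψ))
    · intro Δ Θ hΔ hΘ
      exact ⟨le_trans (abs_nonneg _) (le_dDistLogic T hwf hΔ hΘ (DFm.top : DFm A)),
        csSup_le (dSet_nonempty T Δ Θ) (dSet_bddAbove T hwf hΔ hΘ)⟩
    · intro Δ Θ hΔ hΘ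
      simpa [mass, semL] using le_dDistLogic T hwf hΔ hΘ (DFm.top : DFm A)
  refine ⟨hdbm, ?_⟩
  rintro dd ⟨hdd, hleast⟩ Δ Θ hΔ hΘ
  refine le_antisymm (hleast _ hdbm Δ Θ hΔ hΘ) ?_
  exact dDistLogic_le T fun ψ => semL_soundness T hwf hdd ψ Δ Θ hΔ hΘ
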